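/- arXiv:2010.13328 — 2 statements merged into one kernel-verified Lean document; each statement's English description precedes it below -/
import Mathlib

section
/- Let A be a finite σ-structure and k > 0. There is a bijective correspondence between E_k-coalgebras α : A → E_k A and forest covers of the Gaifman graph of A of height ≤ k. Concretely: given a coalgebra α, the relation a ≤ a' iff α(a) ⊑ α(a') is a forest order on A of height ≤ k such that adjacent elements in the Gaifman graph are comparable; and conversely every such forest cover arises from a unique coalgebra. -/
/-- A relational signature: a set of relation symbols with arities. -/
structure Signature where
  symbols : Type
  arity : symbols → ℕ

/-- A relational structure for a signature `σ`. -/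
structure Struct (σ : Signature) where
  carrier : Type
  rel : ∀ r : σ.symbols, (Fin (σ.arity r) → carrier) → Prop

/-- Homomorphisms of relational structures. -/
def IsHom {σ : Signature} (A B : Struct σ) (f : A.carrier → B.carrier) : Prop :=
  ∀ r x, A.rel r x → B.rel r (fun i => f (x i))

/-- Nonempty sequences of length at most `k`. -/
def NESeq (A : Type) (k : ℕ) : Type := { l : List A // l ≠ [] ∧ l.length ≤ k }

/-- The last element of a nonempty sequence (the counit of the EF comonad). -/
def lastOf {A : Type} {k : ℕ} (s : NESeq A k) : A := s.1.getLast s.2.1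

/-- Co-Kleisli coextension for the EF comonad: `f*[a₁,…,a_j] = [f[a₁],…,f[a₁,…,a_j]]`. -/
def coext {A B : Type} {k : ℕ} (f : NESeq A k → B) (s : NESeq A k) : NESeq B k :=
  ⟨(List.finRange s.1.length).map fun i =>
      f ⟨s.1.take (i.1 + 1), by
        have h1 := i.2
        have h2 := s.2.2
        constructor
        · apply List.ne_nil_of_length_pos
          simp [List.length_take]
        · simp [List.length_take]; omega⟩, by
    have h1 := s.2.1
    have h2 := s.2.2
    constructor
    · apply List.ne_nil_of_length_pos
      simpa [List.length_pos_iff] using h1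
    · simpa using h2⟩

/-- The Ehrenfeucht–Fraïssé comonad on structures: the universe of `EF k A` consists of
nonempty sequences of length ≤ k over `A`, and a relation holds of a tuple of sequences
iff they are pairwise prefix-comparable and the relation holds in `A` of their last
elements. -/
def EF {σ : Signature} (k : ℕ) (A : Struct σ) : Struct σ where
  carrier := NESeq A.carrier k
  rel r x := (∀ i j, (x i).1 <+: (x j).1 ∨ (x j).1 <+: (x i).1) ∧
    A.rel r (fun i => lastOf (x i))

/-- The Gaifman graph of a structure. -/
def gaifman {σ : Signature} (A : Struct σ) (a a' : A.carrier) : Prop :=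
  a ≠ a' ∧ ∃ (r : σ.symbols) (x : Fin (σ.arity r) → A.carrier) (i j : Fin (σ.arity r)),
    A.rel r x ∧ x i = a ∧ x j = a' ∧ i ≠ j

/-- `α : A → E_k A` is a coalgebra for the EF comonad: it is a homomorphism satisfying
the counit and comultiplication laws. -/
def IsEFCoalg {σ : Signature} (k : ℕ) (A : Struct σ) (α : A.carrier → NESeq A.carrier k) : Prop :=
  IsHom A (EF k A) α ∧
  (∀ a, lastOf (α a) = a) ∧
  (∀ (a : A.carrier) (i : ℕ) (h : i < (α a).1.length),
      (α ((α a).1.get ⟨i, h⟩)).1 = (α a).1.take (i + 1))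

/-- A forest cover of height ≤ k of a graph `(V, adj)`: a forest order in which the
predecessors of any element form a chain of size ≤ k, and adjacent vertices are
comparable. -/
structure ForestCover (V : Type) (adj : V → V → Prop) (k : ℕ) where
  le : V → V → Prop
  le_refl : ∀ a, le a a
  le_antisymm : ∀ a b, le a b → le b a → a = b
  le_trans : ∀ a b c, le a b → le b c → le a c
  pred_chain : ∀ a b c, le b a → le c a → le b c ∨ le c b
  pred_finite : ∀ a, {b | le b a}.Finite
  height : ∀ a, {b | le b a}.ncard ≤ k
  cover : ∀ a b, adj a b → le a b ∨ le b a
namespace EFAux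

/-! ### Generic forest-cover machinery -/

variable {V : Type} {adj : V → V → Prop} {k : ℕ}

theorem ForestCover.ext' {F G : ForestCover V adj k} (h : F.le = G.le) : F = G := by
  cases F; cases G; cases h; rfl

/-- The number of predecessors of `a` (its rank, 1-based). -/
noncomputable def nrk (F : ForestCover V adj k) (a : V) : ℕ := {b | F.le b a}.ncard

theorem nrk_pos (F : ForestCover V adj k) (a : V) : 1 ≤ nrk F a :=
  (Set.ncard_pos (F.pred_finite a)).mpr ⟨a, F.le_refl a⟩

theorem preds_mono (F : ForestCover V adj k) {a b : V} (h : F.le b a) :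
    {c | F.le c b} ⊆ {c | F.le c a} := fun c hc => F.le_trans c b a hc h

theorem nrk_mono (F : ForestCover V adj k) {a b : V} (h : F.le b a) : nrk F b ≤ nrk F a :=
  Set.ncard_le_ncard (preds_mono F h) (F.pred_finite a)

theorem le_iff_nrk (F : ForestCover V adj k) {a b c : V} (hb : F.le b a) (hc : F.le c a) :
    F.le b c ↔ nrk F b ≤ nrk F c := by
  constructor
  · exact fun h => nrk_mono F h
  · intro h
    rcases F.pred_chain a b c hb hc with h' | h'
    · exact h'
    · have hsub := preds_mono F h'
      have heq : {x | F.le x c} = {x | F.le x b} :=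
        Set.eq_of_subset_of_ncard_le hsub h (F.pred_finite b)
      have : b ∈ {x | F.le x c} := heq.symm ▸ F.le_refl b
      exact this

theorem nrk_injOn (F : ForestCover V adj k) {a b c : V} (hb : F.le b a) (hc : F.le c a)
    (h : nrk F b = nrk F c) : b = c :=
  F.le_antisymm b c ((le_iff_nrk F hb hc).mpr h.le) ((le_iff_nrk F hc hb).mpr h.ge)

theorem exists_rank (F : ForestCover V adj k) (a : V) {m : ℕ} (h1 : 1 ≤ m) (h2 : m ≤ nrk F a) :
    ∃ b, F.le b a ∧ nrk F b = m := by
  have hmaps : nrk F '' {b | F.le b a} ⊆ Set.Icc 1 (nrk F a) := by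
    rintro _ ⟨b, hb, rfl⟩
    exact ⟨nrk_pos F b, nrk_mono F hb⟩
  have hinj : Set.InjOn (nrk F) {b | F.le b a} := fun b hb c hc => nrk_injOn F hb hc
  have hcard : (nrk F '' {b | F.le b a}).ncard = nrk F a := by
    rw [Set.ncard_image_of_injOn hinj]; rfl
  have hIcc : (Set.Icc 1 (nrk F a)).ncard = nrk F a := by
    rw [← Nat.card_coe_set_eq, Nat.card_eq_card_finite_toFinset (Set.finite_Icc _ _)]
    simp
  have heq : nrk F '' {b | F.le b a} = Set.Icc 1 (nrk F a) :=
    Set.eq_of_subset_of_ncard_le hmaps (by rw [hcard, hIcc]) (Set.finite_Icc _ _)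
  have : m ∈ nrk F '' {b | F.le b a} := heq ▸ Set.mem_Icc.mpr ⟨h1, h2⟩
  obtain ⟨b, hb, hbm⟩ := this
  exact ⟨b, hb, hbm⟩

-- The unique predecessor of `a` of rank `m` (for `1 ≤ m ≤ nrk F a`).
open Classical in
noncomputable def pick (F : ForestCover V adj k) (a : V) (m : ℕ) : V :=
  if h : ∃ b, F.le b a ∧ nrk F b = m then h.choose else a

theorem pick_spec (F : ForestCover V adj k) {a : V} {m : ℕ} (h : ∃ b, F.le b a ∧ nrk F b = m) :
    F.le (pick F a m) a ∧ nrk F (pick F a m) = m := by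
  simp only [pick, dif_pos h]; exact h.choose_spec

theorem pick_unique (F : ForestCover V adj k) {a b : V} {m : ℕ} (hb : F.le b a)
    (hm : nrk F b = m) : pick F a m = b := by
  have h : ∃ b, F.le b a ∧ nrk F b = m := ⟨b, hb, hm⟩
  obtain ⟨h1, h2⟩ := pick_spec F h
  exact nrk_injOn F h1 hb (h2.trans hm.symm)

/-- The branch of `a`: its predecessors listed in increasing order. -/
noncomputable def seq (F : ForestCover V adj k) (a : V) : List V :=
  (List.range (nrk F a)).map (fun i => pick F a (i + 1))

theorem seq_length (F : ForestCover V adj k) (a : V) : (seq F a).length = nrk F a := by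
  simp [seq]

theorem seq_getElem (F : ForestCover V adj k) (a : V) {i : ℕ} (h : i < (seq F a).length) :
    (seq F a)[i] = pick F a (i + 1) := by
  simp [seq]

theorem seq_getElem_spec (F : ForestCover V adj k) (a : V) {i : ℕ} (h : i < (seq F a).length) :
    F.le ((seq F a)[i]) a ∧ nrk F ((seq F a)[i]) = i + 1 := by
  rw [seq_getElem F a h]
  exact pick_spec F (exists_rank F a (by omega) (by rw [seq_length] at h; omega))

theorem seq_ne_nil (F : ForestCover V adj k) (a : V) : seq F a ≠ [] := by
  apply List.ne_nil_of_length_pos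
  rw [seq_length]; exact nrk_pos F a

theorem seq_len_le (F : ForestCover V adj k) (a : V) : (seq F a).length ≤ k := by
  rw [seq_length]; exact F.height a

theorem seq_take (F : ForestCover V adj k) {a b : V} (h : F.le b a) :
    seq F b = (seq F a).take (nrk F b) := by
  have hlen : ((seq F a).take (nrk F b)).length = nrk F b := by
    rw [List.length_take, seq_length]
    exact min_eq_left (nrk_mono F h)
  apply List.ext_getElem (by rw [seq_length, hlen])
  intro i h1 h2
  have hi : i < (seq F a).length := by
    rw [seq_length] at h1 ⊢; exact lt_of_lt_of_le h1 (nrk_mono F h)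
  have htake : ((seq F a).take (nrk F b))[i]'h2 = (seq F a)[i]'hi := by
    simp
  rw [htake]
  obtain ⟨hb1, hb2⟩ := seq_getElem_spec F b h1
  obtain ⟨ha1, ha2⟩ := seq_getElem_spec F a hi
  exact nrk_injOn F (F.le_trans _ _ _ hb1 h) ha1 (hb2.trans ha2.symm)

theorem seq_last (F : ForestCover V adj k) (a : V) :
    (seq F a).getLast (seq_ne_nil F a) = a := by
  rw [List.getLast_eq_getElem]
  have hl : (seq F a).length - 1 < (seq F a).length := by
    have := nrk_pos F a; rw [seq_length]; omega
  obtain ⟨h1, h2⟩ := seq_getElem_spec F a hl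
  have hn : (seq F a).length - 1 + 1 = nrk F a := by
    have := nrk_pos F a; rw [seq_length]; omega
  rw [hn] at h2
  exact nrk_injOn F h1 (F.le_refl a) h2

theorem le_iff_prefix (F : ForestCover V adj k) (a b : V) :
    F.le b a ↔ seq F b <+: seq F a := by
  constructor
  · intro h; rw [seq_take F h]; exact List.take_prefix _ _
  · intro h
    have hpos : 0 < (seq F b).length := List.length_pos_iff.mpr (seq_ne_nil F b)
    have hlt : (seq F b).length - 1 < (seq F b).length := by omega
    have hlt' : (seq F b).length - 1 < (seq F a).length := lt_of_lt_of_le hlt h.length_le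
    have hb : (seq F b)[(seq F b).length - 1] = b := by
      rw [← List.getLast_eq_getElem (h := seq_ne_nil F b)]; exact seq_last F b
    have := h.getElem hlt
    rw [hb] at this
    obtain ⟨ha1, _⟩ := seq_getElem_spec F a hlt'
    rw [← this] at ha1
    exact ha1

end EFAux
namespace EFAux
set_option linter.unusedSectionVars false

/-! ### From coalgebras to forest covers -/

variable {σ : Signature} {k : ℕ} {A : Struct σ} [Fintype A.carrier]

theorem coalg_inj {α : A.carrier → NESeq A.carrier k} (hα : IsEFCoalg k A α) :
    Function.Injective α := fun a b h => by
  rw [← hα.2.1 a, ← hα.2.1 b, h]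

theorem coalg_prefix_antisymm {α : A.carrier → NESeq A.carrier k} (hα : IsEFCoalg k A α)
    {a b : A.carrier} (h1 : (α a).1 <+: (α b).1) (h2 : (α b).1 <+: (α a).1) : a = b :=
  coalg_inj hα (Subtype.ext (h1.sublist.antisymm h2.sublist))

noncomputable def toCover (α : A.carrier → NESeq A.carrier k) (hα : IsEFCoalg k A α) :
    ForestCover A.carrier (gaifman A) k where
  le a b := (α a).1 <+: (α b).1
  le_refl a := List.prefix_refl _
  le_antisymm a b h1 h2 := coalg_prefix_antisymm hα h1 h2
  le_trans a b c := List.IsPrefix.trans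
  pred_chain a b c h1 h2 := List.prefix_or_prefix_of_prefix h1 h2
  pred_finite a := Set.toFinite _
  height a := by
    have hmaps : (fun b => (α b).1.length) '' {b | (α b).1 <+: (α a).1} ⊆ Set.Icc 1 k := by
      rintro _ ⟨b, _, rfl⟩
      exact ⟨List.length_pos_iff.mpr (α b).2.1, (α b).2.2⟩
    have hinj : Set.InjOn (fun b => (α b).1.length) {b | (α b).1 <+: (α a).1} := by
      intro b hb c hc h
      apply coalg_prefix_antisymm hα
      · exact List.prefix_of_prefix_length_le hb hc (le_of_eq h)
      · exact List.prefix_of_prefix_length_le hc hb (le_of_eq h.symm)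
    have hIcc : (Set.Icc 1 k).ncard = k := by
      rw [← Nat.card_coe_set_eq, Nat.card_eq_card_finite_toFinset (Set.finite_Icc _ _)]
      simp
    calc {b | (α b).1 <+: (α a).1}.ncard
        = ((fun b => (α b).1.length) '' {b | (α b).1 <+: (α a).1}).ncard :=
          (Set.ncard_image_of_injOn hinj).symm
      _ ≤ (Set.Icc 1 k).ncard := Set.ncard_le_ncard hmaps (Set.finite_Icc _ _)
      _ = k := hIcc
  cover a b hab := by
    obtain ⟨hne, r, x, i, j, hr, hi, hj, hij⟩ := hab
    have h := (hα.1 r x hr).1 i j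
    simp only [hi, hj] at h
    exact h

/-! ### From forest covers to coalgebras -/

variable (F : ForestCover A.carrier (gaifman A) k)

noncomputable def toCoalgFun (a : A.carrier) : NESeq A.carrier k :=
  ⟨seq F a, seq_ne_nil F a, seq_len_le F a⟩

theorem lastOf_toCoalgFun (a : A.carrier) : lastOf (toCoalgFun F a) = a := seq_last F a

theorem toCoalgFun_isCoalg : IsEFCoalg k A (toCoalgFun F) := by
  refine ⟨?_, lastOf_toCoalgFun F, ?_⟩
  · intro r x hr
    constructor
    · intro i j
      by_cases hxe : x i = x j
      · left; show (toCoalgFun F (x i)).1 <+: (toCoalgFun F (x j)).1; rw [hxe]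
      · have hadj : gaifman A (x i) (x j) :=
          ⟨hxe, r, x, i, j, hr, rfl, rfl, fun h => hxe (by rw [h])⟩
        rcases F.cover (x i) (x j) hadj with h | h
        · left; exact (le_iff_prefix F (x j) (x i)).mp h
        · right; exact (le_iff_prefix F (x i) (x j)).mp h
    · have : (fun i => lastOf (toCoalgFun F (x i))) = x := by
        funext i; exact lastOf_toCoalgFun F (x i)
      rw [this]; exact hr
  · intro a i h
    have hget : (toCoalgFun F a).1.get ⟨i, h⟩ = (seq F a)[i] := rfl
    rw [hget]
    obtain ⟨h1, h2⟩ := seq_getElem_spec F a h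
    show seq F ((seq F a)[i]) = (seq F a).take (i + 1)
    rw [seq_take F h1, h2]

/-! ### The two constructions are inverse -/

theorem nrk_toCover {α : A.carrier → NESeq A.carrier k} (hα : IsEFCoalg k A α)
    (a : A.carrier) : nrk (toCover α hα) a = (α a).1.length := by
  have hset : {b | (toCover α hα).le b a} =
      (fun i : Fin (α a).1.length => (α a).1.get i) '' Set.univ := by
    ext b
    constructor
    · intro hb
      have hb' : (α b).1 <+: (α a).1 := hb
      have hlen : 0 < (α b).1.length := List.length_pos_iff.mpr (α b).2.1
      have hle : (α b).1.length ≤ (α a).1.length := hb'.length_le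
      have hlast : b = (α b).1.getLast (α b).2.1 := (hα.2.1 b).symm
      refine ⟨⟨(α b).1.length - 1, by omega⟩, Set.mem_univ _, ?_⟩
      have : (α b).1[(α b).1.length - 1]'(by omega) = (α a).1[(α b).1.length - 1]'(by omega) :=
        hb'.getElem (by omega)
      simp only [List.get_eq_getElem]
      rw [← this, ← List.getLast_eq_getElem (h := (α b).2.1), ← hlast]
    · rintro ⟨⟨i, hi⟩, -, rfl⟩
      show (α ((α a).1.get ⟨i, hi⟩)).1 <+: (α a).1
      rw [hα.2.2 a i hi]
      exact List.take_prefix _ _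
  have hinj : Function.Injective (fun i : Fin (α a).1.length => (α a).1.get i) := by
    rintro ⟨i, hi⟩ ⟨j, hj⟩ h
    have h1 := hα.2.2 a i hi
    have h2 := hα.2.2 a j hj
    simp only at h
    rw [h] at h1
    have : (α a).1.take (i + 1) = (α a).1.take (j + 1) := by rw [← h1, ← h2]
    have hl : ((α a).1.take (i + 1)).length = ((α a).1.take (j + 1)).length := by rw [this]
    simp only [List.length_take] at hl
    have : i = j := by omega
    simp [this]
  rw [nrk, hset, Set.ncard_image_of_injective _ hinj, Set.ncard_univ]
  simp

theorem seq_toCover {α : A.carrier → NESeq A.carrier k} (hα : IsEFCoalg k A α)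
    (a : A.carrier) : seq (toCover α hα) a = (α a).1 := by
  apply List.ext_getElem
  · rw [seq_length, nrk_toCover hα]
  · intro i h1 h2
    obtain ⟨hb1, hb2⟩ := seq_getElem_spec (toCover α hα) a h1
    have hget : (α a).1[i] = (α a).1.get ⟨i, h2⟩ := rfl
    have hpred : (toCover α hα).le ((α a).1.get ⟨i, h2⟩) a := by
      show (α ((α a).1.get ⟨i, h2⟩)).1 <+: (α a).1
      rw [hα.2.2 a i h2]; exact List.take_prefix _ _
    have hnrk : nrk (toCover α hα) ((α a).1.get ⟨i, h2⟩) = i + 1 := by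
      rw [nrk_toCover hα, hα.2.2 a i h2, List.length_take]
      omega
    rw [hget]
    exact nrk_injOn (toCover α hα) hb1 hpred (hb2.trans hnrk.symm)

end EFAux
/-- For a finite structure `A` and `k > 0`, there is a bijective
correspondence between `E_k`-coalgebras on `A` and forest covers of the Gaifman graph
of `A` of height ≤ k; concretely, the bijection sends a coalgebra `α` to the forest
order `a ≤ a' ↔ α(a) ⊑ α(a')`. -/
theorem EFcoalgebras_equiv_forestCovers
    (σ : Signature) (k : ℕ) (hk : 0 < k) (A : Struct σ) [Fintype A.carrier] :
    ∃ e : {α : A.carrier → NESeq A.carrier k // IsEFCoalg k A α} ≃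
          ForestCover A.carrier (gaifman A) k,
      ∀ (α : {α : A.carrier → NESeq A.carrier k // IsEFCoalg k A α}) (a a' : A.carrier),
        (e α).le a a' ↔ (α.1 a).1 <+: (α.1 a').1 := by
  refine ⟨⟨fun α => EFAux.toCover α.1 α.2,
          fun F => ⟨EFAux.toCoalgFun F, EFAux.toCoalgFun_isCoalg F⟩, ?_, ?_⟩, ?_⟩
  · rintro ⟨α, hα⟩
    apply Subtype.ext
    funext a
    apply Subtype.ext
    exact EFAux.seq_toCover hα a
  · intro F
    apply EFAux.ForestCover.ext'
    funext b a
    apply propext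
    exact ⟨fun h => (EFAux.le_iff_prefix F a b).mpr h, fun h => (EFAux.le_iff_prefix F a b).mp h⟩
  · intro α a a'
    exact Iff.rfl
end

section
/- Let G = (V, ⌢) be a finite graph and k > 0. The following are equivalent: (1) G has a tree decomposition of width < k; (2) G has a k-pebble forest cover, i.e. a forest cover (V, ≤) together with a function p : V → {1,…,k} such that whenever v ⌢ v' and v ≤ v', then p(v) ≠ p(w) for every w with v < w ≤ v'. -/
/-- The universe of the pebbling comonad: finite nonempty sequences of moves
`(pebble index, element)`. -/
def Peb (A : Type) (k : ℕ) : Type := { l : List (Fin k × A) // l ≠ [] }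

/-- Last element of a pebbling play. -/
def lastP {A : Type} {k : ℕ} (s : Peb A k) : Fin k × A := s.1.getLast s.2

/-- The pebbling compatibility condition on a pair of plays: they are
prefix-comparable, and the pebble index of the last move of the shorter one does not
reappear in the suffix extending it to the longer one. -/
def pebCond {A : Type} {k : ℕ} (s t : List (Fin k × A)) : Prop :=
  (s <+: t ∧ ∀ m ∈ t.drop s.length, s.getLast?.map Prod.fst ≠ some m.1) ∨
  (t <+: s ∧ ∀ m ∈ s.drop t.length, t.getLast?.map Prod.fst ≠ some m.1)

/-- The pebbling comonad on structures: `P_k A` has universe the finite nonempty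
sequences over `{1,…,k} × A`; a relation holds of a tuple of plays iff they are
pairwise prefix-comparable satisfying the pebbling condition, and the relation holds in
`A` of their last elements. -/
def PebStruct {σ : Signature} (k : ℕ) (A : Struct σ) : Struct σ where
  carrier := Peb A.carrier k
  rel r x := (∀ i j, pebCond (x i).1 (x j).1) ∧ A.rel r (fun i => (lastP (x i)).2)

/-- Co-Kleisli coextension for the pebbling comonad. -/
def coextP {A B : Type} {k : ℕ} (f : Peb A k → B) (s : Peb A k) : Peb B k :=
  ⟨(List.finRange s.1.length).map fun i =>
      ((s.1.get i).1, f ⟨s.1.take (i.1 + 1), by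
        have := i.2
        apply List.ne_nil_of_length_pos
        simp only [List.length_take]
        omega⟩), by
    apply List.ne_nil_of_length_pos
    have := s.2
    simp only [List.length_map, List.length_finRange]
    exact List.length_pos_iff.mpr this⟩

/-- `α : A → P_k A` is a coalgebra for the pebbling comonad. -/
def IsPebCoalg {σ : Signature} (k : ℕ) (A : Struct σ) (α : A.carrier → Peb A.carrier k) : Prop :=
  IsHom A (PebStruct k A) α ∧
  (∀ a, (lastP (α a)).2 = a) ∧
  (∀ (a : A.carrier) (i : ℕ) (h : i < (α a).1.length),
      (α ((α a).1.get ⟨i, h⟩).2).1 = (α a).1.take (i + 1))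

/-- A `k`-pebble forest cover of a graph `(V, adj)`: a forest cover together with a
pebbling function `p : V → {1,…,k}` such that if `v ⌢ v'` with `v ≤ v'` then
`p v ≠ p w` for all `w` with `v < w ≤ v'`. -/
structure PebbleForestCover (V : Type) (adj : V → V → Prop) (k : ℕ) where
  le : V → V → Prop
  le_refl : ∀ a, le a a
  le_antisymm : ∀ a b, le a b → le b a → a = b
  le_trans : ∀ a b c, le a b → le b c → le a c
  pred_chain : ∀ a b c, le b a → le c a → le b c ∨ le c b
  pred_finite : ∀ a, {b | le b a}.Finite
  cover : ∀ a b, adj a b → le a b ∨ le b a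
  p : V → Fin k
  pebble : ∀ v v' w, adj v v' → le v v' → le v w → v ≠ w → le w v' → p v ≠ p w

/-- A tree decomposition of width ≤ w of a graph `(V, adj)`: a tree `(T, ≤)` with a
labelling `λ : T → P(V)` such that every vertex occurs in some label, every edge is
contained in some label, the set of nodes containing a given vertex is path-closed, and
every label has at most `w + 1` elements. -/
structure TreeDecomp (V : Type) (adj : V → V → Prop) (w : ℕ) where
  T : Type
  le : T → T → Prop
  le_refl : ∀ a, le a a
  le_antisymm : ∀ a b, le a b → le b a → a = b
  le_trans : ∀ a b c, le a b → le b c → le a c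
  pred_chain : ∀ a b c, le b a → le c a → le b c ∨ le c b
  pred_finite : ∀ a, {b | le b a}.Finite
  root : T
  root_le : ∀ x, le root x
  label : T → Set V
  td1 : ∀ v, ∃ x, v ∈ label x
  td2 : ∀ v v', adj v v' → ∃ x, v ∈ label x ∧ v' ∈ label x
  td3 : ∀ (v : V) (x y z : T), v ∈ label x → v ∈ label y →
      (le z x ∨ le z y) → (∀ u, le u x → le u y → le u z) → v ∈ label z
  label_finite : ∀ x, (label x).Finite
  width : ∀ x, (label x).ncard ≤ w + 1

section AuxTDPFC

private lemma chain_min_finset {T : Type} (le : T → T → Prop)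
    (hrefl : ∀ a, le a a) (htrans : ∀ a b c, le a b → le b c → le a c)
    (F : Finset T) :
    F.Nonempty → (∀ a ∈ F, ∀ b ∈ F, le a b ∨ le b a) → ∃ m ∈ F, ∀ u ∈ F, le m u := by
  classical
  induction F using Finset.induction_on with
  | empty => rintro ⟨a, ha⟩ _; simp at ha
  | @insert a s hnot ih =>
    intro _ hchain
    rcases s.eq_empty_or_nonempty with rfl | hs
    · refine ⟨a, Finset.mem_insert_self a _, ?_⟩
      intro u hu
      rcases Finset.mem_insert.mp hu with rfl | hu
      · exact hrefl u
      · simp at hu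
    · obtain ⟨m, hm, hmin⟩ := ih hs
        (fun x hx y hy => hchain x (Finset.mem_insert_of_mem hx) y (Finset.mem_insert_of_mem hy))
      rcases hchain a (Finset.mem_insert_self a s) m (Finset.mem_insert_of_mem hm) with h | h
      · refine ⟨a, Finset.mem_insert_self a s, ?_⟩
        intro u hu
        rcases Finset.mem_insert.mp hu with rfl | hu
        · exact hrefl u
        · exact htrans _ _ _ h (hmin u hu)
      · refine ⟨m, Finset.mem_insert_of_mem hm, ?_⟩
        intro u hu
        rcases Finset.mem_insert.mp hu with rfl | hu
        · exact h
        · exact hmin u hu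

private lemma chain_min {T : Type} (le : T → T → Prop)
    (hrefl : ∀ a, le a a) (htrans : ∀ a b c, le a b → le b c → le a c)
    (S : Set T) (hfin : S.Finite) (hne : S.Nonempty)
    (hchain : ∀ a ∈ S, ∀ b ∈ S, le a b ∨ le b a) :
    ∃ m ∈ S, ∀ u ∈ S, le m u := by
  obtain ⟨m, hm, h⟩ := chain_min_finset le hrefl htrans hfin.toFinset
    (by simpa using hne)
    (by intro a ha b hb
        rw [Set.Finite.mem_toFinset] at ha hb
        exact hchain a ha b hb)
  exact ⟨m, hfin.mem_toFinset.mp hm, fun u hu => h u (hfin.mem_toFinset.mpr hu)⟩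

private lemma exists_notin_of_ncard_lt {k : ℕ} {S : Set (Fin k)} (h : S.ncard < k) :
    ∃ c : Fin k, c ∉ S := by
  by_contra hc
  push_neg at hc
  have : S = Set.univ := Set.eq_univ_iff_forall.mpr hc
  rw [this, Set.ncard_univ, Nat.card_eq_fintype_card, Fintype.card_fin] at h
  omega

private lemma greedy_coloring {V : Type} [Fintype V] {k : ℕ} (hk : 0 < k)
    (B : V → Set V) (μ : V → ℕ)
    (hcard : ∀ w, (B w).ncard < k)
    (hsym : ∀ v w, v ∈ B w → μ v < μ w ∨ w ∈ B v)
    (hne : ∀ v w, v ∈ B w → μ v ≠ μ w) :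
    ∃ p : V → Fin k, ∀ v w, v ∈ B w → p v ≠ p w := by
  classical
  have key : ∀ n, ∃ p : V → Fin k, ∀ v w, v ∈ B w → μ v < n → μ w < n → p v ≠ p w := by
    intro n
    induction n with
    | zero => exact ⟨fun _ => ⟨0, hk⟩, fun v w _ h _ => by omega⟩
    | succ n ih =>
      obtain ⟨p, hp⟩ := ih
      have fresh : ∀ w, ∃ c : Fin k, c ∉ p '' {v | v ∈ B w ∧ μ v < n} := by
        intro w
        apply exists_notin_of_ncard_lt
        calc (p '' {v | v ∈ B w ∧ μ v < n}).ncard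
            ≤ {v | v ∈ B w ∧ μ v < n}.ncard := Set.ncard_image_le (Set.toFinite _)
          _ ≤ (B w).ncard := Set.ncard_le_ncard (fun v hv => hv.1) (Set.toFinite _)
          _ < k := hcard w
      choose f hf using fresh
      refine ⟨fun w => if μ w < n then p w else f w, ?_⟩
      intro v w hvw hv hw
      by_cases h1 : μ v < n <;> by_cases h2 : μ w < n
      · simp only [if_pos h1, if_pos h2]; exact hp v w hvw h1 h2
      · simp only [if_pos h1, if_neg h2]
        intro he
        exact hf w ⟨v, ⟨hvw, h1⟩, he⟩
      · simp only [if_neg h1, if_pos h2]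
        have hwv : w ∈ B v := by
          rcases hsym v w hvw with h | h
          · omega
          · exact h
        intro he
        exact hf v ⟨w, ⟨hwv, h2⟩, he.symm⟩
      · exact absurd (hne v w hvw) (by omega)
  obtain ⟨p, hp⟩ := key ((Finset.univ.sup μ) + 1)
  refine ⟨p, fun v w h => hp v w h ?_ ?_⟩
  · have := Finset.le_sup (f := μ) (Finset.mem_univ v); omega
  · have := Finset.le_sup (f := μ) (Finset.mem_univ w); omega

private lemma td_to_pfc {V : Type} [Fintype V] {adj : V → V → Prop} {k : ℕ} (hk : 0 < k)
    (D : TreeDecomp V adj (k - 1)) : Nonempty (PebbleForestCover V adj k) := by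
  classical
  have hwidth : ∀ x, (D.label x).ncard ≤ k := by
    intro x; have := D.width x; omega
  choose x0 hx0 using D.td1
  -- `t v` : the minimal tree node whose label contains `v`
  have hex : ∀ v : V, ∃ m, (D.le m (x0 v) ∧ v ∈ D.label m) ∧
      ∀ u, D.le u (x0 v) → v ∈ D.label u → D.le m u := by
    intro v
    obtain ⟨m, hm, hmin⟩ := chain_min D.le D.le_refl D.le_trans
      {u | D.le u (x0 v) ∧ v ∈ D.label u}
      ((D.pred_finite (x0 v)).subset (fun u hu => hu.1))
      ⟨x0 v, D.le_refl _, hx0 v⟩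
      (fun a ha b hb => D.pred_chain (x0 v) a b ha.1 hb.1)
    exact ⟨m, hm, fun u h1 h2 => hmin u ⟨h1, h2⟩⟩
  choose t ht using hex
  have tmem : ∀ v, v ∈ D.label (t v) := fun v => (ht v).1.2
  have tmin : ∀ v y, v ∈ D.label y → D.le (t v) y := by
    intro v y hy
    obtain ⟨m, hm, hmax⟩ := chain_min (fun a b => D.le b a) D.le_refl
      (fun a b c h1 h2 => D.le_trans c b a h2 h1)
      {u | D.le u (x0 v) ∧ D.le u y}
      ((D.pred_finite (x0 v)).subset (fun u hu => hu.1))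
      ⟨D.root, D.root_le _, D.root_le _⟩
      (fun a ha b hb => (D.pred_chain (x0 v) a b ha.1 hb.1).symm)
    have hvm : v ∈ D.label m :=
      D.td3 v (x0 v) y m (hx0 v) hy (Or.inl hm.1) (fun u h1 h2 => hmax u ⟨h1, h2⟩)
    exact D.le_trans _ _ _ ((ht v).2 m hm.1 hvm) hm.2
  -- depth in the tree
  obtain ⟨d, hd⟩ : ∃ d : D.T → ℕ, ∀ u, d u = {b | D.le b u}.ncard := ⟨_, fun _ => rfl⟩
  have d_strict : ∀ a b, D.le a b → a ≠ b → d a < d b := by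
    intro a b h hab
    rw [hd, hd]
    apply Set.ncard_lt_ncard _ (D.pred_finite b)
    rw [Set.ssubset_iff_subset_ne]
    constructor
    · exact fun u hu => D.le_trans u a b hu h
    · intro hEq
      have hb : b ∈ {x | D.le x a} := by rw [hEq]; exact D.le_refl b
      exact hab (D.le_antisymm a b h hb)
  -- an injective enumeration of V
  obtain ⟨e, he⟩ : ∃ e : V → ℕ, ∀ v, e v = ((Fintype.equivFin V) v : ℕ) := ⟨_, fun _ => rfl⟩
  have e_inj : ∀ v w, e v = e w → v = w := by
    intro v w h
    rw [he, he] at h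
    exact (Fintype.equivFin V).injective (Fin.ext h)
  have e_lt : ∀ v, e v < Fintype.card V := by
    intro v; rw [he]; exact (Fintype.equivFin V v).2
  set N := Fintype.card V with hN
  obtain ⟨μ, hμ⟩ : ∃ μ : V → ℕ, ∀ v, μ v = d (t v) * (N + 1) + e v := ⟨_, fun _ => rfl⟩
  have μ_lt : ∀ v w, D.le (t v) (t w) → t v ≠ t w → μ v < μ w := by
    intro v w h hntw
    have h1 := d_strict _ _ h hntw
    have h2 := e_lt v
    rw [hμ, hμ]
    calc d (t v) * (N + 1) + e v < d (t v) * (N + 1) + (N + 1) := by omega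
      _ = (d (t v) + 1) * (N + 1) := by ring
      _ ≤ d (t w) * (N + 1) := Nat.mul_le_mul_right _ h1
      _ ≤ d (t w) * (N + 1) + e w := Nat.le_add_right _ _
  have μ_inj : ∀ v w, t v = t w → μ v = μ w → v = w := by
    intro v w hteq h
    apply e_inj
    have h1 : μ v % (N + 1) = e v := by
      rw [hμ, Nat.mul_comm, Nat.mul_add_mod, Nat.mod_eq_of_lt (by have := e_lt v; omega)]
    have h2 : μ w % (N + 1) = e w := by
      rw [hμ, Nat.mul_comm, Nat.mul_add_mod, Nat.mod_eq_of_lt (by have := e_lt w; omega)]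
    rw [← h1, ← h2, h]
  -- the forbidden sets and greedy coloring
  obtain ⟨B, hB⟩ : ∃ B : V → Set V, ∀ w, B w = {v | v ∈ D.label (t w) ∧ v ≠ w} :=
    ⟨_, fun _ => rfl⟩
  have hcard : ∀ w, (B w).ncard < k := by
    intro w
    have hsub : B w ⊆ D.label (t w) \ {w} := by
      intro v hv
      rw [hB] at hv
      exact ⟨hv.1, hv.2⟩
    have h1 : (D.label (t w) \ {w}).ncard = (D.label (t w)).ncard - 1 :=
      Set.ncard_diff_singleton_of_mem (tmem w)
    have h2 : (B w).ncard ≤ (D.label (t w) \ {w}).ncard :=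
      Set.ncard_le_ncard hsub (Set.toFinite _)
    have h3 := hwidth (t w)
    have h4 : 0 < (D.label (t w)).ncard :=
      (Set.ncard_pos (D.label_finite _)).mpr ⟨w, tmem w⟩
    omega
  have hsym : ∀ v w, v ∈ B w → μ v < μ w ∨ w ∈ B v := by
    intro v w hv
    rw [hB] at hv
    have hle : D.le (t v) (t w) := tmin v (t w) hv.1
    by_cases heq : t v = t w
    · right
      rw [hB]
      refine ⟨?_, Ne.symm hv.2⟩
      rw [heq]
      exact tmem w
    · exact Or.inl (μ_lt v w hle heq)
  have hne' : ∀ v w, v ∈ B w → μ v ≠ μ w := by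
    intro v w hv hμeq
    rw [hB] at hv
    have hle : D.le (t v) (t w) := tmin v (t w) hv.1
    by_cases heq : t v = t w
    · exact hv.2 (μ_inj v w heq hμeq)
    · exact absurd hμeq (Nat.ne_of_lt (μ_lt v w hle heq))
  obtain ⟨p, hp⟩ := greedy_coloring hk B μ hcard hsym hne'
  -- the forest order
  obtain ⟨lle, hlle⟩ : ∃ lle : V → V → Prop, ∀ v w, lle v w ↔
      ((t v ≠ t w ∧ D.le (t v) (t w)) ∨ (t v = t w ∧ e v ≤ e w)) := ⟨_, fun _ _ => Iff.rfl⟩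
  have lle_le_t : ∀ v w, lle v w → D.le (t v) (t w) := by
    intro v w h
    rw [hlle] at h
    rcases h with h | h
    · exact h.2
    · rw [h.1]; exact D.le_refl _
  refine ⟨⟨lle, ?_, ?_, ?_, ?_, fun a => Set.toFinite _, ?_, p, ?_⟩⟩
  · -- refl
    intro a
    rw [hlle]
    exact Or.inr ⟨rfl, le_refl _⟩
  · -- antisymm
    intro a b h1 h2
    rw [hlle] at h1 h2
    rcases h1 with h1 | h1 <;> rcases h2 with h2 | h2
    · exact absurd (D.le_antisymm _ _ h1.2 h2.2) h1.1
    · exact absurd h2.1 (Ne.symm h1.1)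
    · exact absurd h1.1 (Ne.symm h2.1)
    · exact e_inj a b (Nat.le_antisymm h1.2 h2.2)
  · -- trans
    intro a b c h1 h2
    rw [hlle] at h1 h2 ⊢
    rcases h1 with h1 | h1 <;> rcases h2 with h2 | h2
    · left
      refine ⟨?_, D.le_trans _ _ _ h1.2 h2.2⟩
      intro heq
      apply h1.1
      apply D.le_antisymm _ _ h1.2
      rw [← heq] at h2
      exact h2.2
    · left
      rw [← h2.1]
      exact h1
    · left
      rw [h1.1]
      exact h2
    · exact Or.inr ⟨h1.1.trans h2.1, h1.2.trans h2.2⟩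
  · -- pred_chain
    intro a b c hb hc
    by_cases hbc : t b = t c
    · rcases Nat.le_total (e b) (e c) with h | h
      · left; rw [hlle]; exact Or.inr ⟨hbc, h⟩
      · right; rw [hlle]; exact Or.inr ⟨hbc.symm, h⟩
    · rcases D.pred_chain (t a) (t b) (t c) (lle_le_t b a hb) (lle_le_t c a hc) with h | h
      · left; rw [hlle]; exact Or.inl ⟨hbc, h⟩
      · right; rw [hlle]; exact Or.inl ⟨Ne.symm hbc, h⟩
  · -- cover
    intro a b hadj
    obtain ⟨x, hax, hbx⟩ := D.td2 a b hadj
    by_cases hab : t a = t b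
    · rcases Nat.le_total (e a) (e b) with h | h
      · left; rw [hlle]; exact Or.inr ⟨hab, h⟩
      · right; rw [hlle]; exact Or.inr ⟨hab.symm, h⟩
    · rcases D.pred_chain x (t a) (t b) (tmin a x hax) (tmin b x hbx) with h | h
      · left; rw [hlle]; exact Or.inl ⟨hab, h⟩
      · right; rw [hlle]; exact Or.inl ⟨Ne.symm hab, h⟩
  · -- pebble condition
    intro v v' w hadj h1 h2 hvw h3
    apply hp
    rw [hB]
    refine ⟨?_, hvw⟩
    obtain ⟨x, hvx, hv'x⟩ := D.td2 v v' hadj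
    have le1 : D.le (t v) (t w) := lle_le_t v w h2
    have le2 : D.le (t w) (t v') := lle_le_t w v' h3
    have le3 : D.le (t v') x := tmin v' x hv'x
    have le4 : D.le (t w) x := D.le_trans _ _ _ le2 le3
    exact D.td3 v (t v) x (t w) (tmem v) hvx (Or.inr le4)
      (fun u hu1 _ => D.le_trans u (t v) (t w) hu1 le1)

private lemma pfc_to_td {V : Type} [Fintype V] {adj : V → V → Prop}
    (hsymm : ∀ a b, adj a b → adj b a) {k : ℕ} (hk : 0 < k)
    (P : PebbleForestCover V adj k) : Nonempty (TreeDecomp V adj (k - 1)) := by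
  classical
  obtain ⟨L, hL⟩ : ∃ L : V → Set V, ∀ b, L b =
      {w | P.le w b ∧ ∀ u, P.le w u → w ≠ u → P.le u b → P.p u ≠ P.p w} := ⟨_, fun _ => rfl⟩
  obtain ⟨ole, hole⟩ : ∃ ole : Option V → Option V → Prop, ∀ x y, ole x y ↔
      (x = none ∨ ∃ a b, x = some a ∧ y = some b ∧ P.le a b) := ⟨_, fun _ _ => Iff.rfl⟩
  have olen : ∀ y, ole none y := fun y => (hole _ _).mpr (Or.inl rfl)
  have oless : ∀ a b, ole (some a) (some b) ↔ P.le a b := by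
    intro a b
    rw [hole]
    constructor
    · rintro (h | ⟨a', b', ha, hb, h⟩)
      · simp at h
      · rw [Option.some_inj] at ha hb
        rw [ha, hb]
        exact h
    · intro h
      exact Or.inr ⟨a, b, rfl, rfl, h⟩
  have olesn : ∀ a, ¬ ole (some a) none := by
    intro a h
    rw [hole] at h
    rcases h with h | ⟨a', b', _, hb, _⟩
    · simp at h
    · simp at hb
  obtain ⟨lab, hlabn, hlabs⟩ : ∃ lab : Option V → Set V,
      lab none = ∅ ∧ ∀ b, lab (some b) = L b := ⟨fun x => x.elim ∅ L, rfl, fun _ => rfl⟩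
  have memself : ∀ v, v ∈ L v := by
    intro v
    rw [hL]
    exact ⟨P.le_refl v, fun u h1 h2 h3 => absurd (P.le_antisymm _ _ h1 h3) h2⟩
  refine ⟨⟨Option V, ole, ?_, ?_, ?_, ?_, fun a => Set.toFinite _, none, olen, lab,
    ?_, ?_, ?_, fun x => Set.toFinite _, ?_⟩⟩
  · -- refl
    intro a
    cases a with
    | none => exact olen none
    | some a => exact (oless a a).mpr (P.le_refl a)
  · -- antisymm
    intro a b h1 h2
    cases a with
    | none =>
      cases b with
      | none => rfl
      | some b => exact absurd h2 (olesn b)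
    | some a =>
      cases b with
      | none => exact absurd h1 (olesn a)
      | some b =>
        rw [oless] at h1 h2
        rw [P.le_antisymm a b h1 h2]
  · -- trans
    intro a b c h1 h2
    cases a with
    | none => exact olen c
    | some a =>
      cases b with
      | none => exact absurd h1 (olesn a)
      | some b =>
        cases c with
        | none => exact absurd h2 (olesn b)
        | some c =>
          rw [oless] at h1 h2 ⊢
          exact P.le_trans a b c h1 h2
  · -- pred_chain
    intro a b c hb hc
    cases b with
    | none => exact Or.inl (olen c)
    | some b =>
      cases c with
      | none => exact Or.inr (olen (some b))
      | some c =>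
        cases a with
        | none => exact absurd hb (olesn b)
        | some a =>
          rw [oless] at hb hc
          rcases P.pred_chain a b c hb hc with h | h
          · exact Or.inl ((oless b c).mpr h)
          · exact Or.inr ((oless c b).mpr h)
  · -- td1
    intro v
    refine ⟨some v, ?_⟩
    rw [hlabs]
    exact memself v
  · -- td2
    intro v v' hadj
    rcases P.cover v v' hadj with h | h
    · refine ⟨some v', ?_, ?_⟩
      · rw [hlabs, hL]
        exact ⟨h, fun u h1 h2 h3 => (P.pebble v v' u hadj h h1 h2 h3).symm⟩
      · rw [hlabs]
        exact memself v'
    · refine ⟨some v, ?_, ?_⟩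
      · rw [hlabs]
        exact memself v
      · rw [hlabs, hL]
        exact ⟨h, fun u h1 h2 h3 => (P.pebble v' v u (hsymm v v' hadj) h h1 h2 h3).symm⟩
  · -- td3
    intro v x y z hvx hvy hz hmeet
    cases x with
    | none => rw [hlabn] at hvx; exact absurd hvx (Set.notMem_empty v)
    | some a =>
      cases y with
      | none => rw [hlabn] at hvy; exact absurd hvy (Set.notMem_empty v)
      | some b =>
        rw [hlabs, hL] at hvx hvy
        cases z with
        | none =>
          exact absurd (hmeet (some v) ((oless v a).mpr hvx.1) ((oless v b).mpr hvy.1)) (olesn v)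
        | some c =>
          rw [hlabs, hL]
          have hvc : P.le v c :=
            (oless v c).mp (hmeet (some v) ((oless v a).mpr hvx.1) ((oless v b).mpr hvy.1))
          refine ⟨hvc, ?_⟩
          intro u h1 h2 h3
          rcases hz with hca | hcb
          · rw [oless] at hca
            exact hvx.2 u h1 h2 (P.le_trans u c a h3 hca)
          · rw [oless] at hcb
            exact hvy.2 u h1 h2 (P.le_trans u c b h3 hcb)
  · -- width
    intro x
    have hk1 : k - 1 + 1 = k := by omega
    rw [hk1]
    cases x with
    | none => rw [hlabn]; simp
    | some b =>
      rw [hlabs]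
      have hinj : Set.InjOn P.p (L b) := by
        intro w hw w' hw' hpw
        rw [hL] at hw hw'
        by_contra hnew
        rcases P.pred_chain b w w' hw.1 hw'.1 with h | h
        · exact hw.2 w' h hnew hw'.1 hpw.symm
        · exact hw'.2 w h (Ne.symm hnew) hw.1 hpw
      calc (L b).ncard = (P.p '' L b).ncard := (Set.ncard_image_of_injOn hinj).symm
        _ ≤ (Set.univ : Set (Fin k)).ncard :=
            Set.ncard_le_ncard (Set.subset_univ _) (Set.toFinite _)
        _ = k := by rw [Set.ncard_univ, Nat.card_eq_fintype_card, Fintype.card_fin]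

end AuxTDPFC

/-- A finite graph has a tree decomposition of width < k iff it has a
`k`-pebble forest cover. -/
theorem treeDecomp_iff_pebbleForestCover
    (V : Type) [Fintype V] (adj : V → V → Prop)
    (hsymm : ∀ a b, adj a b → adj b a) (hirr : ∀ a, ¬ adj a a)
    (k : ℕ) (hk : 0 < k) :
    Nonempty (TreeDecomp V adj (k - 1)) ↔ Nonempty (PebbleForestCover V adj k) := by
  constructor
  · rintro ⟨D⟩
    exact td_to_pfc hk D
  · rintro ⟨P⟩
    exact pfc_to_td hsymm hk P
end
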